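/- Let γ ∈ (0,1) and p ∈ [0,1). The function f(p) = (log(W(1-pγ)/(v̄(1-p))))/log γ + 1/(1-p) is strictly increasing in p on [0,1), for any fixed W, v̄ > 0. -/

import Mathlib

open Set

theorem stmt_14 (γ W v : ℝ) (hγ : γ ∈ Ioo (0:ℝ) 1) (hW : 0 < W) (hv : 0 < v) :
    StrictMonoOn
      (fun p : ℝ => Real.log (W * (1 - p * γ) / (v * (1 - p))) / Real.log γ + 1 / (1 - p))
      (Ico (0:ℝ) 1) := by
  obtain ⟨hγ0, hγ1⟩ := hγ
  have hL : Real.log γ < 0 := Real.log_neg hγ0 hγ1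
  have hLle : Real.log γ ≤ γ - 1 := Real.log_le_sub_one_of_pos hγ0
  set g : ℝ → ℝ := fun p =>
    (Real.log W + Real.log (1 - p * γ) - Real.log v - Real.log (1 - p)) / Real.log γ
      + (1 - p)⁻¹ with hgdef
  have hA : ∀ p : ℝ, p ∈ Ico (0:ℝ) 1 → 0 < 1 - p * γ := by
    intro p hp
    nlinarith [hp.1, hp.2]
  have hB : ∀ p : ℝ, p ∈ Ico (0:ℝ) 1 → 0 < 1 - p := fun p hp => by
    have := hp.2; linarith
  have hmono : StrictMonoOn g (Ico (0:ℝ) 1) := by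
    apply strictMonoOn_of_deriv_pos (convex_Ico 0 1)
    · apply ContinuousOn.add
      · apply ContinuousOn.div_const
        apply ContinuousOn.sub
        apply ContinuousOn.sub
        apply ContinuousOn.add
        · exact continuousOn_const
        · exact ContinuousOn.log (by fun_prop) (fun p hp => (hA p hp).ne')
        · exact continuousOn_const
        · exact ContinuousOn.log (by fun_prop) (fun p hp => (hB p hp).ne')
      · exact ContinuousOn.inv₀ (by fun_prop) (fun p hp => (hB p hp).ne')
    · intro x hx
      rw [interior_Ico] at hx
      obtain ⟨hx0, hx1⟩ := hx
      have hAx : 0 < 1 - x * γ := hA x ⟨hx0.le, hx1⟩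
      have hBx : 0 < 1 - x := by linarith
      have hD : HasDerivAt g
          ((1 - γ) / ((1 - x * γ) * (1 - x) * Real.log γ) + 1 / (1 - x) ^ 2) x := by
        have h1 : HasDerivAt (fun p : ℝ => 1 - p * γ) (-γ) x := by
          simpa using ((hasDerivAt_id x).mul_const γ).const_sub 1
        have h2 : HasDerivAt (fun p : ℝ => 1 - p) (-1 : ℝ) x := by
          simpa using (hasDerivAt_id x).const_sub 1
        have h1l : HasDerivAt (fun p : ℝ => Real.log (1 - p * γ))
            ((-γ) / (1 - x * γ)) x := h1.log hAx.ne'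
        have h2l : HasDerivAt (fun p : ℝ => Real.log (1 - p))
            ((-1) / (1 - x)) x := h2.log hBx.ne'
        have h3 : HasDerivAt (fun p : ℝ => (1 - p)⁻¹)
            (-(-1) / (1 - x) ^ 2) x := h2.inv hBx.ne'
        have hnum : HasDerivAt
            (fun p : ℝ => Real.log W + Real.log (1 - p * γ) - Real.log v - Real.log (1 - p))
            ((-γ) / (1 - x * γ) - (-1) / (1 - x)) x := by
          exact ((h1l.const_add (Real.log W)).sub_const (Real.log v)).sub h2l
        have : HasDerivAt g ((-γ / (1 - x * γ) - -1 / (1 - x)) / Real.log γ + - -1 / (1 - x) ^ 2) x :=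
          (hnum.div_const (Real.log γ)).add h3
        convert this using 1
        rw [div_sub_div _ _ hAx.ne' hBx.ne', div_div]
        ring
      rw [hD.deriv]
      have hx' : x * γ < x := by nlinarith
      have key : (1 - γ) / ((1 - x * γ) * (1 - x) * (-Real.log γ)) < 1 / (1 - x) ^ 2 := by
        rw [div_lt_div_iff₀ (mul_pos (mul_pos hAx hBx) (neg_pos.mpr hL)) (pow_pos hBx 2)]
        nlinarith [sq_nonneg (1 - x), mul_pos hBx (neg_pos.mpr hL)]
      have hrw : (1 - γ) / ((1 - x * γ) * (1 - x) * Real.log γ)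
          = -((1 - γ) / ((1 - x * γ) * (1 - x) * (-Real.log γ))) := by
        rw [mul_neg, div_neg, neg_neg]
      rw [hrw]
      linarith
  intro a ha b hb hab
  have heq : ∀ p : ℝ, p ∈ Ico (0:ℝ) 1 →
      Real.log (W * (1 - p * γ) / (v * (1 - p))) / Real.log γ + 1 / (1 - p) = g p := by
    intro p hp
    have hAp := hA p hp
    have hBp := hB p hp
    rw [Real.log_div (by positivity) (by positivity), Real.log_mul hW.ne' hAp.ne',
      Real.log_mul hv.ne' hBp.ne', hgdef, one_div]
    ring_nf
  simp only
  rw [heq a ha, heq b hb]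
  exact hmono ha hb hab
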